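/- arXiv:2009.00198 — 4 statements merged into one kernel-verified Lean document; each statement's English description precedes it below -/
import Mathlib

section
/- Let G be a finite bipartite graph on parts U (roads) and V (vehicle types) where the edge set of G is determined by a flow matrix f (edge (i,j) present iff f_i^j > 0). If G contains a cycle, then there exists a flow f̃ with the same row and column sums as f (i.e., same total flow per vehicle type), whose associated edge set is a strict subset of that of f (at least one cycle edge removed, no edges added). -/
/-- The bipartite graph of a flow: roads `Fin n` on one side, vehicle types
`Fin m` on the other, with an edge between road `i` and type `j` iff `f i j > 0`. -/
def flowGraph {n m : ℕ} (f : Fin n → Fin m → ℝ) : SimpleGraph (Fin n ⊕ Fin m) where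
  Adj x y := ∃ i j, 0 < f i j ∧
    ((x = Sum.inl i ∧ y = Sum.inr j) ∨ (x = Sum.inr j ∧ y = Sum.inl i))
  symm := by
    constructor
    rintro x y ⟨i, j, h, ⟨rfl, rfl⟩ | ⟨rfl, rfl⟩⟩
    · exact ⟨i, j, h, Or.inr ⟨rfl, rfl⟩⟩
    · exact ⟨i, j, h, Or.inl ⟨rfl, rfl⟩⟩
  loopless := by
    constructor
    rintro x ⟨i, j, h, ⟨rfl, hx⟩ | ⟨rfl, hx⟩⟩ <;> simp at hx

/-- Signed incidence of a single step of a walk. -/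
def stepMat {n m : ℕ} (x y : Fin n ⊕ Fin m) : Fin n → Fin m → ℝ :=
  fun i j => (if x = Sum.inl i ∧ y = Sum.inr j then (1:ℝ) else 0)
    - (if x = Sum.inr j ∧ y = Sum.inl i then (1:ℝ) else 0)

/-- The circulation matrix of a walk. -/
def walkMat {n m : ℕ} {f : Fin n → Fin m → ℝ} :
    ∀ {x y : Fin n ⊕ Fin m}, (flowGraph f).Walk x y → (Fin n → Fin m → ℝ)
  | _, _, .nil => 0
  | _, _, .cons (u := x) (v := z) _ p => stepMat x z + walkMat p

lemma sum_ite_and_left {β : Type*} [Fintype β] [DecidableEq β]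
    (P : Prop) [Decidable P] (b : β) (c : ℝ) :
    ∑ j : β, (if P ∧ b = j then c else 0) = if P then c else 0 := by
  by_cases h : P <;> simp [h]

lemma sum_ite_and_right {β : Type*} [Fintype β] [DecidableEq β]
    (P : Prop) [Decidable P] (b : β) (c : ℝ) :
    ∑ j : β, (if b = j ∧ P then c else 0) = if P then c else 0 := by
  by_cases h : P <;> simp [h]

lemma walkMat_rowSum {n m : ℕ} {f : Fin n → Fin m → ℝ} {x y : Fin n ⊕ Fin m}
    (p : (flowGraph f).Walk x y) (i : Fin n) :
    ∑ j, walkMat p i j =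
      (if x = Sum.inl i then (1:ℝ) else 0) - (if y = Sum.inl i then (1:ℝ) else 0) := by
  induction p with
  | nil => simp [walkMat]
  | cons h p ih =>
    obtain ⟨a, b, hab, ⟨rfl, rfl⟩ | ⟨rfl, rfl⟩⟩ := h <;>
      simp [walkMat, stepMat, Finset.sum_add_distrib, Finset.sum_sub_distrib, ih,
        sum_ite_and_left, sum_ite_and_right] <;>
      split_ifs <;> simp_all [Finset.filter_eq, Finset.filter_eq']

lemma walkMat_colSum {n m : ℕ} {f : Fin n → Fin m → ℝ} {x y : Fin n ⊕ Fin m}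
    (p : (flowGraph f).Walk x y) (j : Fin m) :
    ∑ i, walkMat p i j =
      (if y = Sum.inr j then (1:ℝ) else 0) - (if x = Sum.inr j then (1:ℝ) else 0) := by
  induction p with
  | nil => simp [walkMat]
  | cons h p ih =>
    obtain ⟨a, b, hab, ⟨rfl, rfl⟩ | ⟨rfl, rfl⟩⟩ := h <;>
      simp [walkMat, stepMat, Finset.sum_add_distrib, Finset.sum_sub_distrib, ih,
        sum_ite_and_left, sum_ite_and_right] <;>
      split_ifs <;> simp_all [Finset.filter_eq, Finset.filter_eq']

lemma walkMat_support {n m : ℕ} {f : Fin n → Fin m → ℝ} {x y : Fin n ⊕ Fin m}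
    (p : (flowGraph f).Walk x y) (i : Fin n) (j : Fin m)
    (h : walkMat p i j ≠ 0) : 0 < f i j := by
  induction p with
  | nil => simp [walkMat] at h
  | cons ha p ih =>
    obtain ⟨a, b, hab, ⟨rfl, rfl⟩ | ⟨rfl, rfl⟩⟩ := ha
    · by_cases hij : a = i ∧ b = j
      · obtain ⟨rfl, rfl⟩ := hij; exact hab
      · apply ih
        intro h0
        apply h
        simp only [walkMat, stepMat, Pi.add_apply, h0, add_zero]
        simp
        tauto
    · by_cases hij : a = i ∧ b = j
      · obtain ⟨rfl, rfl⟩ := hij; exact hab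
      · apply ih
        intro h0
        apply h
        simp only [walkMat, stepMat, Pi.add_apply, h0, add_zero]
        simp
        tauto

lemma walkMat_mem_edges {n m : ℕ} {f : Fin n → Fin m → ℝ} {x y : Fin n ⊕ Fin m}
    (p : (flowGraph f).Walk x y) (i : Fin n) (j : Fin m)
    (h : walkMat p i j ≠ 0) : s(Sum.inl i, Sum.inr j) ∈ p.edges := by
  induction p with
  | nil => simp [walkMat] at h
  | cons ha p ih =>
    rename_i u v w
    rw [SimpleGraph.Walk.edges_cons, List.mem_cons]
    by_cases hw : walkMat p i j ≠ 0
    · exact Or.inr (ih hw)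
    · push_neg at hw
      left
      have hs : stepMat u v i j ≠ 0 := by
        intro h0
        apply h
        simp [walkMat, h0, hw]
      unfold stepMat at hs
      by_cases h1 : u = Sum.inl i ∧ v = Sum.inr j
      · rw [h1.1, h1.2]
      · by_cases h2 : u = Sum.inr j ∧ v = Sum.inl i
        · rw [h2.1, h2.2, Sym2.eq_swap]
        · simp [h1, h2] at hs

lemma walkMat_cycle_ne_zero {n m : ℕ} {f : Fin n → Fin m → ℝ} {v : Fin n ⊕ Fin m}
    (p : (flowGraph f).Walk v v) (hp : p.IsCycle) :
    ∃ a b, walkMat p a b ≠ 0 := by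
  cases p with
  | nil => exact absurd rfl hp.ne_nil
  | cons ha q =>
    rename_i z
    obtain ⟨a, b, hab, ⟨h1, h2⟩ | ⟨h1, h2⟩⟩ := ha
    · subst h1; subst h2
      have hnd : s(Sum.inl a, Sum.inr b) ∉ q.edges := by
        have := hp.edges_nodup
        change (s(_, _) :: q.edges).Nodup at this
        exact (List.nodup_cons.mp this).1
      refine ⟨a, b, ?_⟩
      have hq : walkMat q a b = 0 := by
        by_contra hq0
        exact hnd (walkMat_mem_edges q a b hq0)
      simp [walkMat, stepMat, hq]
    · subst h1; subst h2
      have hnd : s(Sum.inl a, Sum.inr b) ∉ q.edges := by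
        have := hp.edges_nodup
        change (s(_, _) :: q.edges).Nodup at this
        rw [Sym2.eq_swap] at this
        exact (List.nodup_cons.mp this).1
      refine ⟨a, b, ?_⟩
      have hq : walkMat q a b = 0 := by
        by_contra hq0
        exact hnd (walkMat_mem_edges q a b hq0)
      simp [walkMat, stepMat, hq]

/-- If the bipartite graph of a nonnegative flow `f` contains a cycle, then there
is a flow `f̃` with the same row and column sums whose edge set is a strict subset
of that of `f`: no new edges, and at least one edge removed. -/
theorem cycle_breaking_flow
    (n m : ℕ) (f : Fin n → Fin m → ℝ) (hf : ∀ i j, 0 ≤ f i j)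
    (hcyc : ∃ (v : Fin n ⊕ Fin m) (p : (flowGraph f).Walk v v), p.IsCycle) :
    ∃ ftil : Fin n → Fin m → ℝ,
      (∀ i j, 0 ≤ ftil i j) ∧
      (∀ i, ∑ j, ftil i j = ∑ j, f i j) ∧
      (∀ j, ∑ i, ftil i j = ∑ i, f i j) ∧
      (∀ i j, 0 < ftil i j → 0 < f i j) ∧
      (∃ i j, 0 < f i j ∧ ftil i j = 0) := by
  obtain ⟨v, p, hp⟩ := hcyc
  set D : Fin n → Fin m → ℝ := walkMat p with hD
  have hrow : ∀ i, ∑ j, D i j = 0 := by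
    intro i; rw [hD, walkMat_rowSum]; ring
  have hcol : ∀ j, ∑ i, D i j = 0 := by
    intro j; rw [hD, walkMat_colSum]; ring
  have hsupp : ∀ i j, D i j ≠ 0 → 0 < f i j := fun i j h => walkMat_support p i j h
  obtain ⟨a, b, hab⟩ := walkMat_cycle_ne_zero p hp
  have hneg : ∃ i j, D i j < 0 := by
    rcases lt_or_gt_of_ne hab with h | h
    · exact ⟨a, b, h⟩
    · by_contra hno
      push_neg at hno
      have hzero : ∀ i ∈ Finset.univ, D i b = 0 := by
        rw [← Finset.sum_eq_zero_iff_of_nonneg (fun i _ => hno i b)]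
        exact hcol b
      exact absurd (hzero a (Finset.mem_univ a)) (ne_of_gt h)
  set S : Finset (Fin n × Fin m) := Finset.univ.filter (fun q => D q.1 q.2 < 0) with hS
  have hSne : S.Nonempty := by
    obtain ⟨i, j, hij⟩ := hneg
    exact ⟨(i, j), by simp [hS, hij]⟩
  obtain ⟨⟨i₀, j₀⟩, hmem, hmin⟩ :=
    S.exists_min_image (fun q => f q.1 q.2 / (-D q.1 q.2)) hSne
  have hD0 : D i₀ j₀ < 0 := by simpa [hS] using hmem
  set t : ℝ := f i₀ j₀ / (-D i₀ j₀) with ht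
  have ht0 : 0 < t := div_pos (hsupp i₀ j₀ (ne_of_lt hD0)) (by linarith)
  refine ⟨fun i j => f i j + t * D i j, ?_, ?_, ?_, ?_, ?_⟩
  · intro i j
    dsimp only
    rcases le_or_gt 0 (D i j) with h | h
    · have : 0 ≤ t * D i j := mul_nonneg ht0.le h
      linarith [hf i j]
    · have hmem' : (i, j) ∈ S := by simp [hS, h]
      have h2 : t ≤ f i j / (-D i j) := hmin (i, j) hmem'
      rw [le_div_iff₀ (by linarith : (0:ℝ) < -D i j)] at h2
      rw [mul_neg] at h2
      linarith
  · intro i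
    rw [Finset.sum_add_distrib, ← Finset.mul_sum, hrow i]
    ring
  · intro j
    rw [Finset.sum_add_distrib, ← Finset.mul_sum, hcol j]
    ring
  · intro i j h
    dsimp only at h
    rcases eq_or_ne (D i j) 0 with h0 | h0
    · simpa [h0] using h
    · exact hsupp i j h0
  · refine ⟨i₀, j₀, hsupp i₀ j₀ (ne_of_lt hD0), ?_⟩
    dsimp only
    rw [ht, div_mul_eq_mul_div, mul_div_assoc, div_neg, div_self (ne_of_lt hD0), ]
    ring
end

section
/- Let f ∈ ℝ_{≥0}^{n×m} and let d ∈ ℝ^{n×m} encode a cycle shift: for a simple cycle through roads 1,...,r and types 1,...,r with f_k^k > 0 for all k ∈ [r], set d_1^1 = -1, d_1^r = 1, d_i^{i-1} = 1, d_i^i = -1 for 2 ≤ i ≤ r, and d_i^j = 0 otherwise. Then for ᾱ = min_{k∈[r]} f_k^k, the flow f + ᾱ d is nonnegative, satisfies ∑_i (f + ᾱd)_i^j = ∑_i f_i^j for all j, and has at least one fewer positive entry than f among the entries (k,k), k ∈ [r]. -/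
/-- Shifting flow around a cycle by `ᾱ = min_{k<r} f k k` keeps the flow
nonnegative, preserves the total flow of each vehicle type, and zeroes out at
least one previously positive diagonal entry `(k,k)`, `k < r`. -/
theorem cycle_shift_feasible_and_breaks_cycle
    (n m r : ℕ) (hr : 2 ≤ r) (hrn : r ≤ n) (hrm : r ≤ m)
    (f : Fin n → Fin m → ℝ) (hf : ∀ i j, 0 ≤ f i j)
    (hdiag : ∀ k (hk : k < r),
      0 < f ⟨k, hk.trans_le hrn⟩ ⟨k, hk.trans_le hrm⟩)
    (hcyc : ∀ k (hk : k < r),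
      0 < f ⟨(k + 1) % r, (Nat.mod_lt _ (by omega)).trans_le hrn⟩ ⟨k, hk.trans_le hrm⟩)
    (d : Fin n → Fin m → ℝ)
    (hd : ∀ i j, d i j =
      if i.val < r ∧ j.val < r then
        (if j.val = i.val then -1
         else if (j.val + 1) % r = i.val then 1 else 0)
      else 0)
    (α : ℝ)
    (hα : IsLeast {x : ℝ | ∃ k, ∃ hk : k < r,
      x = f ⟨k, hk.trans_le hrn⟩ ⟨k, hk.trans_le hrm⟩} α) :
    (∀ i j, 0 ≤ f i j + α * d i j) ∧
    (∀ j, ∑ i, (f i j + α * d i j) = ∑ i, f i j) ∧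
    (∃ k, ∃ hk : k < r,
      0 < f ⟨k, hk.trans_le hrn⟩ ⟨k, hk.trans_le hrm⟩ ∧
      f ⟨k, hk.trans_le hrn⟩ ⟨k, hk.trans_le hrm⟩ +
        α * d ⟨k, hk.trans_le hrn⟩ ⟨k, hk.trans_le hrm⟩ = 0) := by
  obtain ⟨⟨k0, hk0, hk0eq⟩, hlb⟩ := hα
  have hαpos : 0 < α := hk0eq ▸ hdiag k0 hk0
  have hlb' : ∀ k (hk : k < r), α ≤ f ⟨k, hk.trans_le hrn⟩ ⟨k, hk.trans_le hrm⟩ :=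
    fun k hk => hlb ⟨k, hk, rfl⟩
  refine ⟨?_, ?_, ?_⟩
  · intro i j
    rw [hd]
    by_cases h1 : i.val < r ∧ j.val < r
    · rcases h1 with ⟨hi, hj⟩
      simp only [hi, hj, and_self, if_true]
      by_cases h2 : j.val = i.val
      · simp only [h2, if_true]
        have heq : f i j = f ⟨i.val, hi.trans_le hrn⟩ ⟨i.val, hi.trans_le hrm⟩ := by
          have hji : j = ⟨i.val, hi.trans_le hrm⟩ := Fin.ext h2
          rw [hji]
        have := hlb' i.val hi
        rw [heq]
        linarith
      · simp only [h2, if_false]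
        by_cases h3 : (j.val + 1) % r = i.val
        · simp only [h3, if_true]
          have := hf i j
          linarith
        · simp only [h3, if_false]
          have := hf i j
          linarith
    · simp only [h1, if_false, mul_zero, add_zero]
      exact hf i j
  · intro j
    rw [Finset.sum_add_distrib, ← Finset.mul_sum]
    have hsum : ∑ i, d i j = 0 := by
      by_cases hj : j.val < r
      · set a : Fin n := ⟨j.val, hj.trans_le hrn⟩ with ha
        set b : Fin n := ⟨(j.val + 1) % r, (Nat.mod_lt _ (by omega)).trans_le hrn⟩ with hb
        have hmod : (j.val + 1) % r ≠ j.val := by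
          rcases Nat.lt_or_ge (j.val + 1) r with h | h
          · rw [Nat.mod_eq_of_lt h]; omega
          · have h' : j.val + 1 = r := by omega
            rw [h', Nat.mod_self]; omega
        have hab : a ≠ b := by
          simp only [ha, hb, Ne, Fin.mk.injEq]
          exact fun h => hmod h.symm
        have hrest : ∑ i, d i j = ∑ i ∈ ({a, b} : Finset (Fin n)), d i j := by
          refine (Finset.sum_subset (Finset.subset_univ _) ?_).symm
          intro i _ hi
          simp only [Finset.mem_insert, Finset.mem_singleton, not_or] at hi
          rw [hd]
          by_cases hir : i.val < r
          · simp only [hir, hj, and_self, if_true]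
            rw [if_neg, if_neg]
            · intro h; exact hi.2 (Fin.ext h.symm)
            · intro h; exact hi.1 (Fin.ext h.symm)
          · simp [hir]
        rw [hrest, Finset.sum_pair hab, hd, hd]
        have hmodlt : (j.val + 1) % r < r := Nat.mod_lt _ (by omega)
        simp only [ha, hb, hj, and_self, if_true, and_true, hmodlt]
        rw [if_neg (fun h => hmod h.symm)]
        norm_num
      · refine Finset.sum_eq_zero fun i _ => ?_
        rw [hd, if_neg (fun h => hj h.2)]
    rw [hsum, mul_zero, add_zero]
  · refine ⟨k0, hk0, hk0eq ▸ hαpos, ?_⟩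
    rw [hd]
    simp only [hk0, and_self, if_true, if_pos rfl]
    rw [← hk0eq]
    ring
end

section
/- There exists a minimizer f* of a convex quadratic social cost J (with block Hessian blocks (H_i)_{j,j'} = a_i^j + a_i^{j'}) over the flow polytope F such that the bipartite graph G(f*) (edge (i,j) iff (f*)_i^j > 0) is acyclic. -/
namespace AcFlow
variable {n m : ℕ}

/-- Signed indicator of a directed dart: `+1` if it goes from road `i` to type `j`,
`-1` if it goes from type `j` to road `i`, `0` otherwise. -/
noncomputable def dirSign (i : Fin n) (j : Fin m) (dt : (Fin n ⊕ Fin m) × (Fin n ⊕ Fin m)) : ℝ :=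
  if dt = (Sum.inl i, Sum.inr j) then 1 else if dt = (Sum.inr j, Sum.inl i) then -1 else 0

lemma dart_shape {f : Fin n → Fin m → ℝ} (dt : (flowGraph f).Dart) :
    (∃ i j, 0 < f i j ∧ dt.toProd = (Sum.inl i, Sum.inr j)) ∨
    (∃ i j, 0 < f i j ∧ dt.toProd = (Sum.inr j, Sum.inl i)) := by
  obtain ⟨i, j, hpos, hcase⟩ := dt.adj
  rcases hcase with ⟨h1, h2⟩ | ⟨h1, h2⟩
  · exact Or.inl ⟨i, j, hpos, Prod.ext h1 h2⟩
  · exact Or.inr ⟨i, j, hpos, Prod.ext h1 h2⟩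

lemma adj_pos {f : Fin n → Fin m → ℝ} {i : Fin n} {j : Fin m}
    (h : (flowGraph f).Adj (Sum.inl i) (Sum.inr j)) : 0 < f i j := by
  obtain ⟨i', j', hpos, hcase⟩ := h
  rcases hcase with ⟨h1, h2⟩ | ⟨h1, h2⟩
  · simp only [Sum.inl.injEq, Sum.inr.injEq] at h1 h2; subst h1; subst h2; exact hpos
  · simp at h1

lemma list_sum_map_neg {α : Type*} (l : List α) (g : α → ℝ) :
    (l.map (fun x => -g x)).sum = -(l.map g).sum := by
  induction l with
  | nil => simp
  | cons x l ih => simp [ih]; ring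

lemma rowsum_dirSign {f : Fin n → Fin m → ℝ} (dt : (flowGraph f).Dart) (i : Fin n) :
    ∑ j, dirSign i j dt.toProd =
      (if dt.toProd.1 = Sum.inl i then 1 else 0) - (if dt.toProd.2 = Sum.inl i then 1 else 0) := by
  rcases dart_shape dt with ⟨i', j', _, hp⟩ | ⟨i', j', _, hp⟩ <;> rw [hp] <;>
    rw [Finset.sum_eq_single j']
  · by_cases hii : i' = i <;> simp [dirSign, Prod.ext_iff, hii, eq_comm] <;> try (split_ifs <;> norm_num)
  · intro b _ hb; simp [dirSign, Prod.ext_iff, (Ne.symm hb : ¬ j' = b)]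
  · simp
  · by_cases hii : i' = i <;> simp [dirSign, Prod.ext_iff, hii, eq_comm] <;> try (split_ifs <;> norm_num)
  · intro b _ hb; simp [dirSign, Prod.ext_iff, (Ne.symm hb : ¬ j' = b)]
  · simp

lemma colsum_dirSign {f : Fin n → Fin m → ℝ} (dt : (flowGraph f).Dart) (j : Fin m) :
    ∑ i, dirSign i j dt.toProd =
      (if dt.toProd.2 = Sum.inr j then 1 else 0) - (if dt.toProd.1 = Sum.inr j then 1 else 0) := by
  rcases dart_shape dt with ⟨i', j', _, hp⟩ | ⟨i', j', _, hp⟩ <;> rw [hp] <;>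
    rw [Finset.sum_eq_single i']
  · by_cases hjj : j' = j <;> simp [dirSign, Prod.ext_iff, hjj, eq_comm] <;> try (split_ifs <;> norm_num)
  · intro b _ hb; simp [dirSign, Prod.ext_iff, (Ne.symm hb : ¬ i' = b)]
  · simp
  · by_cases hjj : j' = j <;> simp [dirSign, Prod.ext_iff, hjj, eq_comm] <;> try (split_ifs <;> norm_num)
  · intro b _ hb; simp [dirSign, Prod.ext_iff, (Ne.symm hb : ¬ i' = b)]
  · simp

lemma sum_list_swap {α β : Type*} [Fintype β] (l : List α) (g : β → α → ℝ) :
    ∑ b, (l.map (g b)).sum = (l.map (fun x => ∑ b, g b x)).sum := by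
  induction l with
  | nil => simp
  | cons x l ih => simp [Finset.sum_add_distrib, ih]

lemma walk_balance {V : Type*} {G : SimpleGraph V} {u v : V} (p : G.Walk u v) (x : V) [DecidableEq V] :
    ((p.darts.map (fun dt => (if dt.toProd.1 = x then (1:ℝ) else 0) - (if dt.toProd.2 = x then 1 else 0))).sum)
    = (if u = x then 1 else 0) - (if v = x then 1 else 0) := by
  induction p with
  | nil => simp
  | cons h p ih => simp only [SimpleGraph.Walk.darts_cons, List.map_cons, List.sum_cons, ih]; ring

/-- A cycle in the bipartite flow graph yields a circulation direction `d`: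
zero row sums, zero column sums, supported on the support of `f`, and nonzero. -/
lemma cycle_direction {n m : ℕ} (f : Fin n → Fin m → ℝ) {v : Fin n ⊕ Fin m}
    (c : (flowGraph f).Walk v v) (hc : c.IsCycle) :
    ∃ d : Fin n → Fin m → ℝ,
      (∀ i, ∑ j, d i j = 0) ∧ (∀ j, ∑ i, d i j = 0) ∧
      (∀ i j, d i j ≠ 0 → 0 < f i j) ∧ (∃ i j, d i j ≠ 0) := by
  classical
  set l := c.darts with hl
  refine ⟨fun i j => (l.map (fun dt => dirSign i j dt.toProd)).sum, ?_, ?_, ?_, ?_⟩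
  · intro i
    rw [sum_list_swap]
    have : (l.map (fun dt => ∑ j, dirSign i j dt.toProd)).sum
        = (l.map (fun dt => (if dt.toProd.1 = Sum.inl i then (1:ℝ) else 0)
            - (if dt.toProd.2 = Sum.inl i then 1 else 0))).sum := by
      congr 1
      exact List.map_congr_left (fun dt _ => rowsum_dirSign dt i)
    rw [this, hl, walk_balance]
    ring
  · intro j
    rw [sum_list_swap]
    have : (l.map (fun dt => ∑ i, dirSign i j dt.toProd)).sum
        = (l.map (fun dt => -((if dt.toProd.1 = Sum.inr j then (1:ℝ) else 0)
            - (if dt.toProd.2 = Sum.inr j then 1 else 0)))).sum := by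
      congr 1
      exact List.map_congr_left (fun dt _ => by rw [colsum_dirSign]; ring)
    rw [this, list_sum_map_neg, hl, walk_balance]
    ring
  · intro i j hne
    by_contra hf
    apply hne
    apply List.sum_eq_zero
    intro x hx
    obtain ⟨dt, hdt, rfl⟩ := List.mem_map.1 hx
    have hA := dt.adj
    show dirSign i j dt.toProd = 0
    unfold dirSign
    split_ifs with h1 h2
    · exfalso
      rw [h1] at hA
      exact hf (adj_pos hA)
    · exfalso
      rw [h2] at hA
      exact hf (adj_pos hA.symm)
    · rfl
  · -- nonzero entry
    have hnil : l ≠ [] := by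
      have := hc.three_le_length
      intro hnil
      rw [← SimpleGraph.Walk.length_darts, ← hl, hnil] at this
      simp at this
    obtain ⟨dt₀, l', hcons⟩ := List.exists_cons_of_ne_nil hnil
    have hdt₀ : dt₀ ∈ l := by rw [hcons]; exact List.mem_cons_self
    have hinj : ∀ x ∈ l, ∀ y ∈ l, x.edge = y.edge → x = y := by
      have := hc.edges_nodup
      rw [SimpleGraph.Walk.edges, ← hl] at this
      exact List.inj_on_of_nodup_map this
    have hnd : l.Nodup := by
      have := hc.edges_nodup
      rw [SimpleGraph.Walk.edges, ← hl] at this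
      exact this.of_map _
    have key : ∀ (i₀ : Fin n) (j₀ : Fin m),
        (dt₀.toProd = (Sum.inl i₀, Sum.inr j₀) ∨ dt₀.toProd = (Sum.inr j₀, Sum.inl i₀)) →
        (l.map (fun dt => dirSign i₀ j₀ dt.toProd)).sum ≠ 0 := by
      intro i₀ j₀ hshape
      have hperm := List.perm_cons_erase hdt₀
      rw [(hperm.map _).sum_eq]
      have hz : ((l.erase dt₀).map (fun dt => dirSign i₀ j₀ dt.toProd)).sum = 0 := by
        apply List.sum_eq_zero
        intro x hx
        obtain ⟨dt, hdt, rfl⟩ := List.mem_map.1 hx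
        obtain ⟨hne, hmem⟩ := (List.Nodup.mem_erase_iff hnd).1 hdt
        by_contra hnz
        apply hne
        apply hinj dt hmem dt₀ hdt₀
        have hdtshape : dt.toProd = (Sum.inl i₀, Sum.inr j₀) ∨ dt.toProd = (Sum.inr j₀, Sum.inl i₀) := by
          by_contra hcon
          push_neg at hcon
          simp [dirSign, hcon.1, hcon.2] at hnz
        have e1 : dt.edge = Sym2.mk (Sum.inl i₀) (Sum.inr j₀) := by
          rcases hdtshape with h | h
          · show Sym2.mk dt.toProd.1 dt.toProd.2 = _; rw [h]
          · show Sym2.mk dt.toProd.1 dt.toProd.2 = _; rw [h]; exact Sym2.eq_swap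
        have e2 : dt₀.edge = Sym2.mk (Sum.inl i₀) (Sum.inr j₀) := by
          rcases hshape with h | h
          · show Sym2.mk dt₀.toProd.1 dt₀.toProd.2 = _; rw [h]
          · show Sym2.mk dt₀.toProd.1 dt₀.toProd.2 = _; rw [h]; exact Sym2.eq_swap
        rw [e1, e2]
      rw [List.map_cons, List.sum_cons, hz, add_zero]
      rcases hshape with h | h <;> rw [h] <;> simp [dirSign, Prod.ext_iff]
    rcases dart_shape dt₀ with ⟨i₀, j₀, _, hp⟩ | ⟨i₀, j₀, _, hp⟩
    · exact ⟨i₀, j₀, key i₀ j₀ (Or.inl hp)⟩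
    · exact ⟨i₀, j₀, key i₀ j₀ (Or.inr hp)⟩

lemma exists_neg_entry {m : ℕ} (g : Fin m → ℝ) (hsum : ∑ j, g j = 0) (hne : ∃ j, g j ≠ 0) :
    ∃ j, g j < 0 := by
  by_contra h
  push_neg at h
  obtain ⟨j₀, hj₀⟩ := hne
  exact hj₀ ((Finset.sum_eq_zero_iff_of_nonneg (fun j _ => h j)).1 hsum j₀ (Finset.mem_univ _))

lemma stepsize {n m : ℕ} (f d : Fin n → Fin m → ℝ)
    (hf0 : ∀ i j, 0 ≤ f i j)
    (hsupp : ∀ i j, d i j ≠ 0 → 0 < f i j)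
    (hneg : ∃ i j, d i j < 0) :
    ∃ t : ℝ, 0 < t ∧ (∀ i j, 0 ≤ f i j + t * d i j) ∧
      (∃ i j, f i j ≠ 0 ∧ f i j + t * d i j = 0) := by
  classical
  obtain ⟨i₀, j₀, hij₀⟩ := hneg
  set T : Finset (Fin n × Fin m) := Finset.univ.filter (fun p => d p.1 p.2 < 0) with hT
  have hTne : T.Nonempty := ⟨(i₀, j₀), by simp [hT, hij₀]⟩
  set q : Fin n × Fin m → ℝ := fun p => f p.1 p.2 / (-d p.1 p.2) with hq
  refine ⟨T.inf' hTne q, ?_, ?_, ?_⟩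
  · rw [Finset.lt_inf'_iff]
    intro p hp
    have hd : d p.1 p.2 < 0 := by simpa [hT] using hp
    exact div_pos (hsupp _ _ (ne_of_lt hd)) (by linarith)
  · intro i j
    by_cases hd : d i j < 0
    · have hmem : (i, j) ∈ T := by simp [hT, hd]
      have hle : T.inf' hTne q ≤ f i j / (-d i j) := Finset.inf'_le q hmem
      have h1 : T.inf' hTne q * (-d i j) ≤ f i j / (-d i j) * (-d i j) :=
        mul_le_mul_of_nonneg_right hle (by linarith)
      rw [div_mul_cancel₀ _ (by linarith : (-d i j) ≠ 0)] at h1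
      nlinarith
    · push_neg at hd
      have ht : 0 < T.inf' hTne q := by
        rw [Finset.lt_inf'_iff]
        intro p hp
        have hdp : d p.1 p.2 < 0 := by simpa [hT] using hp
        exact div_pos (hsupp _ _ (ne_of_lt hdp)) (by linarith)
      nlinarith [hf0 i j]
  · obtain ⟨p, hp, hpe⟩ := Finset.exists_mem_eq_inf' hTne q
    have hdp : d p.1 p.2 < 0 := by simpa [hT] using hp
    have hfp : 0 < f p.1 p.2 := hsupp _ _ (ne_of_lt hdp)
    refine ⟨p.1, p.2, ne_of_gt hfp, ?_⟩
    rw [hpe, hq]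
    have hne0 : -d p.1 p.2 ≠ 0 := by linarith
    field_simp
    rw [div_self (ne_of_lt hdp)]; ring

lemma F_compact {n m : ℕ} (Fbar : Fin m → ℝ) :
    IsCompact {f : Fin n → Fin m → ℝ | (∀ i j, 0 ≤ f i j) ∧ ∀ j, ∑ i, f i j = Fbar j} := by
  have h1 : IsClosed {f : Fin n → Fin m → ℝ | ∀ i j, 0 ≤ f i j} := by
    have he : {f : Fin n → Fin m → ℝ | ∀ i j, 0 ≤ f i j} = ⋂ i, ⋂ j, {f | 0 ≤ f i j} := by
      ext f; simp [Set.mem_iInter]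
    rw [he]
    exact isClosed_iInter fun i => isClosed_iInter fun j =>
      isClosed_le continuous_const ((continuous_apply j).comp (continuous_apply i))
  have h2 : IsClosed {f : Fin n → Fin m → ℝ | ∀ j, ∑ i, f i j = Fbar j} := by
    have he : {f : Fin n → Fin m → ℝ | ∀ j, ∑ i, f i j = Fbar j} = ⋂ j, {f | ∑ i, f i j = Fbar j} := by
      ext f; simp [Set.mem_iInter]
    rw [he]
    exact isClosed_iInter fun j => isClosed_eq
      (continuous_finset_sum _ fun i _ => (continuous_apply j).comp (continuous_apply i))
      continuous_const
  have hclosed : IsClosed {f : Fin n → Fin m → ℝ | (∀ i j, 0 ≤ f i j) ∧ ∀ j, ∑ i, f i j = Fbar j} := by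
    have : {f : Fin n → Fin m → ℝ | (∀ i j, 0 ≤ f i j) ∧ ∀ j, ∑ i, f i j = Fbar j}
        = {f | ∀ i j, 0 ≤ f i j} ∩ {f | ∀ j, ∑ i, f i j = Fbar j} := rfl
    rw [this]; exact h1.inter h2
  have hsub : {f : Fin n → Fin m → ℝ | (∀ i j, 0 ≤ f i j) ∧ ∀ j, ∑ i, f i j = Fbar j}
      ⊆ Set.Icc (fun _ _ => 0) (fun _ j => Fbar j) := by
    rintro f ⟨hpos, hsum⟩
    constructor
    · intro i; intro j; exact hpos i j
    · intro i; intro j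
      calc f i j ≤ ∑ i', f i' j :=
            Finset.single_le_sum (fun i' _ => hpos i' j) (Finset.mem_univ i)
        _ = Fbar j := hsum j
  exact IsCompact.of_isClosed_subset isCompact_Icc hclosed hsub

lemma J_cont {n m : ℕ} (a : Fin n → Fin m → ℝ) (b : Fin n → ℝ) :
    Continuous (fun f : Fin n → Fin m → ℝ => ∑ i, (∑ j, f i j) * (b i + ∑ j, a i j * f i j)) := by
  refine continuous_finset_sum _ fun i _ => Continuous.mul ?_ ?_
  · exact continuous_finset_sum _ fun j _ => (continuous_apply j).comp (continuous_apply i)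
  · exact continuous_const.add (continuous_finset_sum _ fun j _ =>
      continuous_const.mul ((continuous_apply j).comp (continuous_apply i)))

lemma J_line {n m : ℕ} (a : Fin n → Fin m → ℝ) (b : Fin n → ℝ) (f d : Fin n → Fin m → ℝ) (t : ℝ)
    (hrow : ∀ i, ∑ j, d i j = 0) :
    ∑ i, (∑ j, (f i j + t * d i j)) * (b i + ∑ j, a i j * (f i j + t * d i j))
      = (∑ i, (∑ j, f i j) * (b i + ∑ j, a i j * f i j))
        + t * ∑ i, (∑ j, f i j) * (∑ j, a i j * d i j) := by
  have key : ∀ i, (∑ j, (f i j + t * d i j)) * (b i + ∑ j, a i j * (f i j + t * d i j))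
      = (∑ j, f i j) * (b i + ∑ j, a i j * f i j) + t * ((∑ j, f i j) * (∑ j, a i j * d i j)) := by
    intro i
    have h1 : ∑ j, (f i j + t * d i j) = ∑ j, f i j := by
      rw [Finset.sum_add_distrib, ← Finset.mul_sum, hrow i, mul_zero, add_zero]
    have h2 : ∑ j, a i j * (f i j + t * d i j)
        = (∑ j, a i j * f i j) + t * ∑ j, a i j * d i j := by
      rw [Finset.mul_sum]
      rw [← Finset.sum_add_distrib]
      exact Finset.sum_congr rfl fun j _ => by ring
    rw [h1, h2]; ring
  rw [Finset.sum_congr rfl fun i _ => key i, Finset.sum_add_distrib, Finset.mul_sum]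

/-- Descent step: a nonzero circulation direction with nonpositive directional derivative
produces a feasible point with no larger cost and strictly smaller support. -/
lemma descend {n m : ℕ} (a : Fin n → Fin m → ℝ) (b : Fin n → ℝ) (Fbar : Fin m → ℝ)
    (f d : Fin n → Fin m → ℝ)
    (hfF : (∀ i j, 0 ≤ f i j) ∧ ∀ j, ∑ i, f i j = Fbar j)
    (hrow : ∀ i, ∑ j, d i j = 0) (hcol : ∀ j, ∑ i, d i j = 0)
    (hsupp : ∀ i j, d i j ≠ 0 → 0 < f i j) (hnz : ∃ i j, d i j ≠ 0)
    (hL : ∑ i, (∑ j, f i j) * (∑ j, a i j * d i j) ≤ 0) :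
    ∃ g : Fin n → Fin m → ℝ, ((∀ i j, 0 ≤ g i j) ∧ ∀ j, ∑ i, g i j = Fbar j) ∧
      (∑ i, (∑ j, g i j) * (b i + ∑ j, a i j * g i j))
        ≤ (∑ i, (∑ j, f i j) * (b i + ∑ j, a i j * f i j)) ∧
      (Finset.univ.filter (fun p : Fin n × Fin m => g p.1 p.2 ≠ 0))
        ⊂ (Finset.univ.filter (fun p : Fin n × Fin m => f p.1 p.2 ≠ 0)) := by
  classical
  have hneg : ∃ i j, d i j < 0 := by
    obtain ⟨i₀, j₀, h₀⟩ := hnz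
    obtain ⟨j, hj⟩ := exists_neg_entry (d i₀) (hrow i₀) ⟨j₀, h₀⟩
    exact ⟨i₀, j, hj⟩
  obtain ⟨t, ht0, hpos, i₁, j₁, hf₁, hzero⟩ := stepsize f d hfF.1 hsupp hneg
  refine ⟨fun i j => f i j + t * d i j, ⟨hpos, ?_⟩, ?_, ?_⟩
  · intro j
    rw [Finset.sum_add_distrib, ← Finset.mul_sum, hcol j, mul_zero, add_zero]
    exact hfF.2 j
  · rw [J_line a b f d t hrow]
    have := mul_nonpos_of_nonneg_of_nonpos ht0.le hL
    linarith
  · rw [Finset.ssubset_iff_of_subset]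
    · refine ⟨(i₁, j₁), ?_, ?_⟩
      · simp [hf₁]
      · simp [hzero]
    · intro p hp
      simp only [Finset.mem_filter, Finset.mem_univ, true_and] at hp ⊢
      intro hfp0
      apply hp
      have hd0 : d p.1 p.2 = 0 := by
        by_contra hd
        exact absurd hfp0 (ne_of_gt (hsupp _ _ hd))
      rw [hfp0, hd0, mul_zero, add_zero]

end AcFlow

/-- There exists a minimizer `f*` of the convex quadratic social cost over the
flow polytope whose associated bipartite graph is acyclic. -/
theorem exists_acyclic_optimal_flow
    (n m : ℕ) (hn : 0 < n)
    (a : Fin n → Fin m → ℝ) (b : Fin n → ℝ)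
    (Fbar : Fin m → ℝ) (hFbar : ∀ j, 0 < Fbar j)
    (F : Set (Fin n → Fin m → ℝ))
    (hF : F = {f | (∀ i j, 0 ≤ f i j) ∧ ∀ j, ∑ i, f i j = Fbar j})
    (J : (Fin n → Fin m → ℝ) → ℝ)
    (hJ : ∀ f, J f = ∑ i, (∑ j, f i j) * (b i + ∑ j, a i j * f i j))
    (hconv : ConvexOn ℝ F J) :
    ∃ fstar ∈ F, (∀ f ∈ F, J fstar ≤ J f) ∧ (flowGraph fstar).IsAcyclic := by
  classical
  subst hF
  set FS : Set (Fin n → Fin m → ℝ) :=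
    {f | (∀ i j, 0 ≤ f i j) ∧ ∀ j, ∑ i, f i j = Fbar j} with hFS
  have hFne : FS.Nonempty := by
    refine ⟨fun _ j => Fbar j / n, fun i j => div_nonneg (hFbar j).le (Nat.cast_nonneg n), fun j => ?_⟩
    rw [Finset.sum_const, Finset.card_univ, Fintype.card_fin, nsmul_eq_mul]
    field_simp
  have hJeq : J = fun f => ∑ i, (∑ j, f i j) * (b i + ∑ j, a i j * f i j) := funext hJ
  have hJcont : ContinuousOn J FS := by
    rw [hJeq]; exact (AcFlow.J_cont a b).continuousOn
  obtain ⟨f₀, hf₀, hmin₀⟩ := (AcFlow.F_compact Fbar).exists_isMinOn hFne hJcont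
  set M : Set (Fin n → Fin m → ℝ) := {f | f ∈ FS ∧ ∀ g ∈ FS, J f ≤ J g} with hM
  have hf₀M : f₀ ∈ M := ⟨hf₀, fun g hg => hmin₀ hg⟩
  set supp : (Fin n → Fin m → ℝ) → Finset (Fin n × Fin m) :=
    fun f => Finset.univ.filter (fun p => f p.1 p.2 ≠ 0) with hsuppdef
  set K : Set ℕ := {k | ∃ f, f ∈ M ∧ (supp f).card = k} with hK
  have hKne : K.Nonempty := ⟨(supp f₀).card, f₀, hf₀M, rfl⟩
  obtain ⟨fstar, hfM, hcard⟩ : ∃ f, f ∈ M ∧ (supp f).card = sInf K := Nat.sInf_mem hKne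
  have hmin : ∀ g ∈ M, (supp fstar).card ≤ (supp g).card := by
    intro g hg
    rw [hcard]
    exact Nat.sInf_le ⟨g, hg, rfl⟩
  refine ⟨fstar, hfM.1, hfM.2, ?_⟩
  intro v c hc
  obtain ⟨d, hrow, hcol, hsupp, hnz⟩ := AcFlow.cycle_direction fstar c hc
  have hfpos : ∀ i j, d i j ≠ 0 → 0 < fstar i j := hsupp
  -- choose the direction with nonpositive directional derivative
  have main : ∀ d' : Fin n → Fin m → ℝ,
      (∀ i, ∑ j, d' i j = 0) → (∀ j, ∑ i, d' i j = 0) →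
      (∀ i j, d' i j ≠ 0 → 0 < fstar i j) → (∃ i j, d' i j ≠ 0) →
      (∑ i, (∑ j, fstar i j) * (∑ j, a i j * d' i j) ≤ 0) → False := by
    intro d' hrow' hcol' hsupp' hnz' hL'
    obtain ⟨g, hgF, hgJ, hss⟩ :=
      AcFlow.descend a b Fbar fstar d' hfM.1 hrow' hcol' hsupp' hnz' hL'
    have hgJ' : J g ≤ J fstar := by rw [hJ g, hJ fstar]; exact hgJ
    have hgM : g ∈ M := ⟨hgF, fun h hh => le_trans hgJ' (hfM.2 h hh)⟩
    have h1 := hmin g hgM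
    have h2 : (supp g).card < (supp fstar).card := Finset.card_lt_card hss
    omega
  rcases le_or_gt (∑ i, (∑ j, fstar i j) * (∑ j, a i j * d i j)) 0 with hL | hL
  · exact main d hrow hcol hsupp hnz hL
  · refine main (fun i j => -d i j) ?_ ?_ ?_ ?_ ?_
    · intro i; rw [Finset.sum_neg_distrib, hrow i, neg_zero]
    · intro j; rw [Finset.sum_neg_distrib, hcol j, neg_zero]
    · intro i j h; exact hsupp i j (by simpa using h)
    · obtain ⟨i, j, h⟩ := hnz; exact ⟨i, j, by simpa using h⟩
    · have heq : (∑ i, (∑ j, fstar i j) * (∑ j, a i j * (-(d i j))))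
          = -(∑ i, (∑ j, fstar i j) * (∑ j, a i j * d i j)) := by
        rw [← Finset.sum_neg_distrib]
        refine Finset.sum_congr rfl fun i _ => ?_
        rw [← mul_neg, ← Finset.sum_neg_distrib]
        congr 1
        exact Finset.sum_congr rfl fun j _ => by ring
      rw [heq]
      linarith
end

section
/- Suppose latencies ℓ_i are continuous and bounded on the compact feasible polytope F, and tolls assign P to road-type pairs outside the support of f*. If P > max over f ∈ F, i, i', j of (ℓ_i(f_i) + μ - ℓ_i(f*_i)) - ℓ_{i'}(f_{i'}), then at any equilibrium flow f̃ under these tolls, f̃_i^j = 0 for all (i,j) with (f*)_i^j = 0 (provided each type has at least one road in the support of f*). -/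
/-- For a sufficiently large penalty toll `P`, no equilibrium flow uses a
road–type pair outside the support of `f*`. -/
theorem large_toll_forbids_off_support_flow
    (n m : ℕ) (Fbar : Fin m → ℝ) (hFbar : ∀ j, 0 < Fbar j)
    (F : Set (Fin n → Fin m → ℝ))
    (hF : F = {f | (∀ i j, 0 ≤ f i j) ∧ ∀ j, ∑ i, f i j = Fbar j})
    (ℓ : Fin n → (Fin m → ℝ) → ℝ) (hcont : ∀ i, Continuous (ℓ i))
    (fstar : Fin n → Fin m → ℝ) (hfs : ∀ i j, 0 ≤ fstar i j)
    (hsupp : ∀ j, ∃ i, 0 < fstar i j)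
    (μ P : ℝ)
    (hP : ∀ f ∈ F, ∀ i i' : Fin n,
      (ℓ i (f i) + μ - ℓ i (fstar i)) - ℓ i' (f i') < P)
    (τ : Fin n → Fin m → ℝ)
    (hτ : ∀ i j, τ i j = if 0 < fstar i j then μ - ℓ i (fstar i) else P)
    (c : Fin n → Fin m → (Fin n → Fin m → ℝ) → ℝ)
    (hc : ∀ i j f, c i j f = ℓ i (f i) + τ i j)
    (ftil : Fin n → Fin m → ℝ) (hftilF : ftil ∈ F)
    (heq : ∀ (j : Fin m) (i i' : Fin n), 0 < ftil i j → c i j ftil ≤ c i' j ftil) :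
    ∀ i j, fstar i j = 0 → ftil i j = 0 := by
  intro i j hzero
  by_contra hne
  have hpos : 0 < ftil i j := lt_of_le_of_ne (by rw [hF] at hftilF; exact hftilF.1 i j) (Ne.symm hne)
  obtain ⟨i', hi'⟩ := hsupp j
  have hle := heq j i i' hpos
  rw [hc, hc, hτ, hτ] at hle
  simp only [hzero, lt_irrefl, if_false, hi', if_pos] at hle
  have := hP ftil hftilF i' i
  linarith
end
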